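/- If there exists an invertible matrix X such that A G = X · diag(I_r, 0) · X⁻¹ with r = rank(A), then G is a generalized inverse of A, i.e., A G A = A. -/

import Mathlib

/-- The n×n block diagonal matrix diag(I_r, 0). -/
def diagIr (n r : ℕ) : Matrix (Fin n) (Fin n) ℝ :=
  Matrix.of fun i j => if i = j ∧ (i : ℕ) < r then (1 : ℝ) else 0

lemma diagIr_eq_diagonal (n r : ℕ) :
    diagIr n r = Matrix.diagonal (fun i : Fin n => if (i : ℕ) < r then (1 : ℝ) else 0) := by
  ext i j
  simp only [diagIr, Matrix.of_apply, Matrix.diagonal]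
  by_cases hij : i = j <;> simp [hij]

lemma diagIr_idem (n r : ℕ) : diagIr n r * diagIr n r = diagIr n r := by
  rw [diagIr_eq_diagonal, Matrix.diagonal_mul_diagonal]
  refine congrArg Matrix.diagonal ?_
  funext i
  by_cases hi : (i : ℕ) < r <;> simp [hi]

lemma diagIr_rank (n r : ℕ) (hr : r ≤ n) : (diagIr n r).rank = r := by
  rw [diagIr_eq_diagonal, Matrix.rank_diagonal]
  have : Fintype.card {i : Fin n // (if (i : ℕ) < r then (1:ℝ) else 0) ≠ 0}
      = Fintype.card (Fin r) := by
    apply Fintype.card_congr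
    refine ⟨fun x => ⟨(x.1 : ℕ), ?_⟩, fun y => ⟨⟨(y : ℕ), lt_of_lt_of_le y.2 hr⟩, ?_⟩, ?_, ?_⟩
    · have := x.2; by_contra hlt; simp [hlt] at this
    · simp [y.2]
    · intro x; rfl
    · intro y; rfl
  rw [this, Fintype.card_fin]

/-- If A G = X diag(I_r, 0) X⁻¹ for invertible X with r = rank(A),
then G is a generalized inverse of A. -/
theorem stmt9 {n : ℕ} (A G X : Matrix (Fin n) (Fin n) ℝ) (hX : IsUnit X)
    (h : A * G = X * diagIr n A.rank * X⁻¹) : A * G * A = A := by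
  have hdet : IsUnit X.det := (Matrix.isUnit_iff_isUnit_det X).mp hX
  have hdetinv : IsUnit X⁻¹.det := by
    rw [Matrix.det_nonsing_inv]
    exact hdet.ringInverse
  have hD : diagIr n A.rank * diagIr n A.rank = diagIr n A.rank := diagIr_idem n A.rank
  set D := diagIr n A.rank
  -- A * G is idempotent
  have hP2 : (A * G) * (A * G) = A * G := by
    rw [h]
    calc X * D * X⁻¹ * (X * D * X⁻¹)
        = X * (D * (X⁻¹ * (X * (D * X⁻¹)))) := by simp only [Matrix.mul_assoc]
      _ = X * (D * (D * X⁻¹)) := by rw [Matrix.nonsing_inv_mul_cancel_left _ _ hdet]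
      _ = X * (D * D) * X⁻¹ := by simp only [Matrix.mul_assoc]
      _ = X * D * X⁻¹ := by rw [hD]
  -- rank of P equals rank of A
  have hrank : (A * G).rank = A.rank := by
    rw [h, Matrix.rank_mul_eq_left_of_isUnit_det _ _ hdetinv,
      Matrix.rank_mul_eq_right_of_isUnit_det _ _ hdet]
    exact diagIr_rank n A.rank (A.rank_le_card_width.trans (by simp))
  -- ranges are equal
  have hle : LinearMap.range (A * G).mulVecLin ≤ LinearMap.range A.mulVecLin := by
    rw [Matrix.mulVecLin_mul]
    exact LinearMap.range_comp_le_range _ _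
  have hrange : LinearMap.range (A * G).mulVecLin = LinearMap.range A.mulVecLin :=
    Submodule.eq_of_le_of_finrank_le hle hrank.ge
  -- P fixes every vector in range of A
  have hfix : ∀ v : Fin n → ℝ, (A * G).mulVec (A.mulVec v) = A.mulVec v := by
    intro v
    have : A.mulVec v ∈ LinearMap.range (A * G).mulVecLin := by
      rw [hrange]; exact ⟨v, rfl⟩
    obtain ⟨w, hw⟩ := this
    simp only [Matrix.mulVecLin_apply] at hw
    rw [← hw, Matrix.mulVec_mulVec, hP2]
  -- conclude
  ext i j
  have := congrFun (hfix (Pi.single j 1)) i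
  rw [Matrix.mulVec_mulVec] at this
  simpa [Matrix.mulVec_single_one] using this
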